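/- Let A be a positive operator on H, U an A-unitary operator (i.e., U admits an A-adjoint U^{♯} with U^{♯}U = (U^{♯})^{♯}U^{♯} = P_A, the projection onto the closure of R(A)), and T an A-bounded operator. Then r_A(TU ± UT) ≤ ‖T‖_A + ‖T²‖_A^{1/2}. -/

import Mathlib

set_option synthInstance.maxHeartbeats 1000000
set_option maxHeartbeats 1000000

open ContinuousLinearMap

variable {H : Type*} [NormedAddCommGroup H] [InnerProductSpace ℂ H] [CompleteSpace H]

/-- The seminorm `‖x‖_A = ‖A^{1/2} x‖ = √⟨Ax, x⟩` induced by a positive operator `A`. -/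
noncomputable def anorm (A : H →L[ℂ] H) (x : H) : ℝ :=
  Real.sqrt (A.reApplyInnerSelf x)

/-- `T` is `A`-bounded: `‖Tx‖_A ≤ c ‖x‖_A` for some `c > 0`. -/
def ABounded (A T : H →L[ℂ] H) : Prop :=
  ∃ c : ℝ, 0 < c ∧ ∀ x : H, anorm A (T x) ≤ c * anorm A x

/-- The operator seminorm `‖T‖_A`: the least `c ≥ 0` with `‖Tx‖_A ≤ c ‖x‖_A` for all `x`. -/
noncomputable def aNorm (A T : H →L[ℂ] H) : ℝ :=
  sInf {c : ℝ | 0 ≤ c ∧ ∀ x : H, anorm A (T x) ≤ c * anorm A x}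

/-- The `A`-spectral radius `r_A(T) = inf_{n ≥ 1} ‖T^n‖_A^{1/n}`. -/
noncomputable def aSpecRad (A T : H →L[ℂ] H) : ℝ :=
  ⨅ n : ℕ+, aNorm A (T ^ (n : ℕ)) ^ ((n : ℝ)⁻¹)

/-- The `A`-numerical radius `ω_A(T) = sup {|⟨ATx, x⟩| : ‖x‖_A = 1}`. -/
noncomputable def aNumRad (A T : H →L[ℂ] H) : ℝ :=
  sSup {c : ℝ | ∃ x : H, anorm A x = 1 ∧ c = ‖(inner ℂ (A (T x)) x : ℂ)‖}

/-- The orthogonal projection `P_A` of `H` onto the closure of the range of `A`. -/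
noncomputable def projA (A : H →L[ℂ] H) : H →L[ℂ] H :=
  haveI : CompleteSpace ((LinearMap.range (A : H →ₗ[ℂ] H)).topologicalClosure : Submodule ℂ H) :=
    ((LinearMap.range (A : H →ₗ[ℂ] H)).isClosed_topologicalClosure).completeSpace_coe
  ((LinearMap.range (A : H →ₗ[ℂ] H)).topologicalClosure).subtypeL ∘L
    Submodule.orthogonalProjectionOnto (LinearMap.range (A : H →ₗ[ℂ] H)).topologicalClosure

lemma anorm_eq_sqrtA (A : H →L[ℂ] H) (hA : A.IsPositive) (x : H) :
    anorm A x = ‖CFC.sqrt A x‖ := by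
  have hA0 : (0 : H →L[ℂ] H) ≤ A := (ContinuousLinearMap.nonneg_iff_isPositive A).2 hA
  have hRR : CFC.sqrt A * CFC.sqrt A = A := CFC.sqrt_mul_sqrt_self A hA0
  have hRsa : IsSelfAdjoint (CFC.sqrt A) :=
    (((ContinuousLinearMap.nonneg_iff_isPositive (CFC.sqrt A)).1
      (CFC.sqrt_nonneg A))).isSelfAdjoint
  have hx : A x = CFC.sqrt A (CFC.sqrt A x) := by
    conv_lhs => rw [← hRR]
    rfl
  have hinner : (inner ℂ (A x) x : ℂ) = inner ℂ (CFC.sqrt A x) (CFC.sqrt A x) := by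
    rw [hx]
    calc (inner ℂ (CFC.sqrt A (CFC.sqrt A x)) x : ℂ)
        = inner ℂ ((ContinuousLinearMap.adjoint (CFC.sqrt A)) (CFC.sqrt A x)) x := by
          rw [hRsa.adjoint_eq]
      _ = inner ℂ (CFC.sqrt A x) (CFC.sqrt A x) :=
          ContinuousLinearMap.adjoint_inner_left _ _ _
  rw [anorm, ContinuousLinearMap.reApplyInnerSelf_apply, hinner,
    inner_self_eq_norm_sq (𝕜 := ℂ)]
  exact Real.sqrt_sq (norm_nonneg _)

lemma anorm_nonneg' (A : H →L[ℂ] H) (x : H) : 0 ≤ anorm A x := Real.sqrt_nonneg _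

lemma aNorm_nonneg' (A T : H →L[ℂ] H) : 0 ≤ aNorm A T :=
  Real.sInf_nonneg fun _c hc => hc.1

lemma aNorm_spec (A S : H →L[ℂ] H) (hS : ABounded A S) (x : H) :
    anorm A (S x) ≤ aNorm A S * anorm A x := by
  obtain ⟨c, hc0, hc⟩ := hS
  have hne : {c : ℝ | 0 ≤ c ∧ ∀ x : H, anorm A (S x) ≤ c * anorm A x}.Nonempty :=
    ⟨c, hc0.le, hc⟩
  rcases eq_or_lt_of_le (anorm_nonneg' A x) with h0 | h0
  · have h1 : anorm A (S x) ≤ 0 := by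
      have h := hc x; rw [← h0, mul_zero] at h; exact h
    have h2 : aNorm A S * anorm A x = 0 := by rw [← h0, mul_zero]
    rw [h2]; exact h1
  · rw [← div_le_iff₀ h0]
    refine le_csInf hne fun d hd => ?_
    rw [div_le_iff₀ h0]
    exact hd.2 x

lemma aNorm_le' (A S : H →L[ℂ] H) {c : ℝ} (h0 : 0 ≤ c)
    (h : ∀ x : H, anorm A (S x) ≤ c * anorm A x) : aNorm A S ≤ c :=
  csInf_le ⟨0, fun _d hd => hd.1⟩ ⟨h0, h⟩

lemma key_ineq (A U T S : H →L[ℂ] H) (hA : A.IsPositive) (hT : ABounded A T)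
    (hU : ∀ x, anorm A (U x) = anorm A x)
    (hS : ∀ x : H, S x = T (U x) + U (T x) ∨ S x = T (U x) - U (T x)) :
    aSpecRad A S ≤ aNorm A T + Real.sqrt (aNorm A (T ^ 2)) := by
  have anx := anorm_eq_sqrtA A hA
  have tri : ∀ x y : H, anorm A (x + y) ≤ anorm A x + anorm A y := by
    intro x y; rw [anx, anx, anx, map_add]; exact norm_add_le _ _
  have tri' : ∀ x y : H, anorm A (x - y) ≤ anorm A x + anorm A y := by
    intro x y; rw [anx, anx, anx, map_sub]; exact norm_sub_le _ _
  set a := aNorm A T with ha_def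
  have ha0 : 0 ≤ a := aNorm_nonneg' A T
  have hTa : ∀ x, anorm A (T x) ≤ a * anorm A x := aNorm_spec A T hT
  have hT2x : ∀ x : H, (T ^ 2) x = T (T x) := by
    intro x; rw [pow_two]; rfl
  have hT2 : ABounded A (T ^ 2) := by
    obtain ⟨c, hc0, hc⟩ := hT
    refine ⟨c * c, mul_pos hc0 hc0, fun x => ?_⟩
    calc anorm A ((T ^ 2) x) = anorm A (T (T x)) := by rw [hT2x]
      _ ≤ c * anorm A (T x) := hc (T x)
      _ ≤ c * (c * anorm A x) :=
          mul_le_mul_of_nonneg_left (hc x) hc0.le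
      _ = c * c * anorm A x := by ring
  have hb0 : 0 ≤ aNorm A (T ^ 2) := aNorm_nonneg' _ _
  set b := Real.sqrt (aNorm A (T ^ 2)) with hb_def
  have hb0' : 0 ≤ b := Real.sqrt_nonneg _
  have hT2b : ∀ x, anorm A ((T ^ 2) x) ≤ b ^ 2 * anorm A x := by
    intro x
    rw [hb_def, Real.sq_sqrt hb0]
    exact aNorm_spec A _ hT2 x
  refine le_of_forall_pos_le_add fun ε hε => ?_
  set b' := b + ε with hb'_def
  have hb'pos : 0 < b' := by rw [hb'_def]; linarith
  set K := max 1 (a / b') with hK_def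
  have hK1 : (1 : ℝ) ≤ K := le_max_left _ _
  have hK0 : 0 ≤ K := zero_le_one.trans hK1
  have hKpos : 0 < K := lt_of_lt_of_le zero_lt_one hK1
  have hKa : a ≤ K * b' := by
    have h : a / b' ≤ K := le_max_right _ _
    calc a = a / b' * b' := by field_simp
      _ ≤ K * b' := mul_le_mul_of_nonneg_right h hb'pos.le
  set s := a + b' with hs_def
  have hs0 : 0 ≤ s := by rw [hs_def]; linarith
  have hT2b' : ∀ x, anorm A ((T ^ 2) x) ≤ b' ^ 2 * anorm A x := by
    intro x
    refine (hT2b x).trans (mul_le_mul_of_nonneg_right ?_ (anorm_nonneg' A x))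
    have : b ≤ b' := by rw [hb'_def]; linarith
    nlinarith
  have ind : ∀ n : ℕ, (∀ x, anorm A ((S ^ n) x) ≤ K * s ^ n * anorm A x) ∧
      (∀ x, anorm A ((S ^ n) (T x)) ≤ K * b' * s ^ n * anorm A x) := by
    intro n
    induction n with
    | zero =>
      constructor
      · intro x
        simp only [pow_zero, ContinuousLinearMap.one_apply, mul_one, one_mul]
        nlinarith [anorm_nonneg' A x]
      · intro x
        simp only [pow_zero, ContinuousLinearMap.one_apply, mul_one]
        calc anorm A (T x) ≤ a * anorm A x := hTa x
          _ ≤ K * b' * anorm A x :=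
            mul_le_mul_of_nonneg_right hKa (anorm_nonneg' A x)
    | succ n IH =>
      have happ : ∀ x : H, (S ^ (n + 1)) x = (S ^ n) (S x) := by
        intro x; rw [pow_succ]; rfl
      have hdec : ∀ x : H,
          anorm A ((S ^ n) (S x)) ≤
            anorm A ((S ^ n) (T (U x))) + anorm A ((S ^ n) (U (T x))) := by
        intro x
        rcases hS x with h | h
        · rw [h, map_add]; exact tri _ _
        · rw [h, map_sub]; exact tri' _ _
      have hKs : (0 : ℝ) ≤ K * s ^ n := mul_nonneg hK0 (pow_nonneg hs0 n)
      constructor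
      · intro x
        calc anorm A ((S ^ (n + 1)) x) = anorm A ((S ^ n) (S x)) := by rw [happ]
          _ ≤ anorm A ((S ^ n) (T (U x))) + anorm A ((S ^ n) (U (T x))) := hdec x
          _ ≤ K * b' * s ^ n * anorm A (U x) + K * s ^ n * anorm A (U (T x)) :=
            add_le_add (IH.2 (U x)) (IH.1 (U (T x)))
          _ = K * b' * s ^ n * anorm A x + K * s ^ n * anorm A (T x) := by
            rw [hU, hU]
          _ ≤ K * b' * s ^ n * anorm A x + K * s ^ n * (a * anorm A x) :=
            add_le_add (le_refl _) (mul_le_mul_of_nonneg_left (hTa x) hKs)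
          _ = K * s ^ (n + 1) * anorm A x := by rw [pow_succ, hs_def]; ring
      · intro x
        calc anorm A ((S ^ (n + 1)) (T x)) = anorm A ((S ^ n) (S (T x))) := by rw [happ]
          _ ≤ anorm A ((S ^ n) (T (U (T x)))) + anorm A ((S ^ n) (U (T (T x)))) :=
            hdec (T x)
          _ ≤ K * b' * s ^ n * anorm A (U (T x)) + K * s ^ n * anorm A (U (T (T x))) :=
            add_le_add (IH.2 (U (T x))) (IH.1 (U (T (T x))))
          _ = K * b' * s ^ n * anorm A (T x) + K * s ^ n * anorm A ((T ^ 2) x) := by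
            rw [hU, hU, hT2x]
          _ ≤ K * b' * s ^ n * (a * anorm A x) + K * s ^ n * (b' ^ 2 * anorm A x) :=
            add_le_add
              (mul_le_mul_of_nonneg_left (hTa x)
                (mul_nonneg (mul_nonneg hK0 hb'pos.le) (pow_nonneg hs0 n)))
              (mul_le_mul_of_nonneg_left (hT2b' x) hKs)
          _ = K * b' * s ^ (n + 1) * anorm A x := by rw [pow_succ, hs_def]; ring
  have hbdd : BddBelow (Set.range fun n : ℕ+ => aNorm A (S ^ (n : ℕ)) ^ ((n : ℝ)⁻¹)) := by
    refine ⟨0, ?_⟩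
    rintro y ⟨m, rfl⟩
    exact Real.rpow_nonneg (aNorm_nonneg' _ _) _
  have hn : ∀ n : ℕ+, aSpecRad A S ≤ K ^ (((n : ℕ) : ℝ))⁻¹ * s := by
    intro n
    have hnne : (((n : ℕ) : ℝ)) ≠ 0 := Nat.cast_ne_zero.2 n.pos.ne'
    have h1 : aSpecRad A S ≤ aNorm A (S ^ (n : ℕ)) ^ (((n : ℕ) : ℝ))⁻¹ :=
      ciInf_le hbdd n
    have hb : aNorm A (S ^ (n : ℕ)) ≤ K * s ^ (n : ℕ) :=
      aNorm_le' A _ (mul_nonneg hK0 (pow_nonneg hs0 _)) (ind (n : ℕ)).1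
    have h2 : aNorm A (S ^ (n : ℕ)) ^ (((n : ℕ) : ℝ))⁻¹ ≤
        (K * s ^ (n : ℕ)) ^ (((n : ℕ) : ℝ))⁻¹ :=
      Real.rpow_le_rpow (aNorm_nonneg' _ _) hb (inv_nonneg.2 (Nat.cast_nonneg _))
    have h3 : (K * s ^ (n : ℕ)) ^ (((n : ℕ) : ℝ))⁻¹ = K ^ (((n : ℕ) : ℝ))⁻¹ * s := by
      rw [Real.mul_rpow hK0 (pow_nonneg hs0 _), ← Real.rpow_natCast s (n : ℕ),
        ← Real.rpow_mul hs0, mul_inv_cancel₀ hnne, Real.rpow_one]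
    exact h1.trans (h2.trans_eq h3)
  have hlim : Filter.Tendsto (fun m : ℕ => K ^ ((((m + 1 : ℕ)) : ℝ))⁻¹ * s)
      Filter.atTop (nhds (1 * s)) := by
    refine Filter.Tendsto.mul_const s ?_
    have h0 : Filter.Tendsto (fun m : ℕ => ((((m + 1 : ℕ)) : ℝ))⁻¹)
        Filter.atTop (nhds 0) :=
      tendsto_inv_atTop_zero.comp
        (tendsto_natCast_atTop_atTop.comp (Filter.tendsto_add_atTop_nat 1))
    have hc : ContinuousAt (fun y : ℝ => K ^ y) 0 :=
      Real.continuousAt_const_rpow hKpos.ne'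
    have := hc.tendsto.comp h0
    rwa [Real.rpow_zero] at this
  have hfin : aSpecRad A S ≤ 1 * s :=
    ge_of_tendsto hlim (Filter.Eventually.of_forall fun m =>
      hn ⟨m + 1, Nat.succ_pos m⟩)
  rw [one_mul, hs_def, hb'_def] at hfin
  linarith

/-- if `U` is `A`-unitary, i.e. `U` has a distinguished `A`-adjoint `U^♯`
(the solution of `A X = U* A` with range in `cl R(A)`), which in turn has a distinguished
`A`-adjoint `(U^♯)^♯`, with `U^♯ U = (U^♯)^♯ U^♯ = P_A`, then
`r_A(TU ± UT) ≤ ‖T‖_A + ‖T²‖_A^{1/2}` for every `A`-bounded `T`. -/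
theorem stmt11 (A U Uadj Uadj2 T : H →L[ℂ] H) (hA : A.IsPositive)
    (hT : ABounded A T)
    (h1 : A ∘L Uadj = (ContinuousLinearMap.adjoint U) ∘L A)
    (h1r : LinearMap.range (Uadj : H →ₗ[ℂ] H) ≤ (LinearMap.range (A : H →ₗ[ℂ] H)).topologicalClosure)
    (h2 : A ∘L Uadj2 = (ContinuousLinearMap.adjoint Uadj) ∘L A)
    (h2r : LinearMap.range (Uadj2 : H →ₗ[ℂ] H) ≤ (LinearMap.range (A : H →ₗ[ℂ] H)).topologicalClosure)
    (hU1 : Uadj ∘L U = projA A) (hU2 : Uadj2 ∘L Uadj = projA A) :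
    aSpecRad A (T * U + U * T) ≤ aNorm A T + Real.sqrt (aNorm A (T ^ 2)) ∧
      aSpecRad A (T * U - U * T) ≤ aNorm A T + Real.sqrt (aNorm A (T ^ 2)) := by
  haveI : CompleteSpace ((LinearMap.range (A : H →ₗ[ℂ] H)).topologicalClosure : Submodule ℂ H) :=
    ((LinearMap.range (A : H →ₗ[ℂ] H)).isClosed_topologicalClosure).completeSpace_coe
  have hprojA_eq : projA A =
      ((LinearMap.range (A : H →ₗ[ℂ] H)).topologicalClosure).subtypeL ∘L
        Submodule.orthogonalProjectionOnto (LinearMap.range (A : H →ₗ[ℂ] H)).topologicalClosure := rfl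
  have memcl : ∀ x, A x ∈ (LinearMap.range (A : H →ₗ[ℂ] H)).topologicalClosure := fun x =>
    Submodule.le_topologicalClosure _ ⟨x, rfl⟩
  have hPA : projA A ∘L A = A := by
    ext x
    have h := Submodule.orthogonalProjectionOnto_mem_subspace_eq_self
      (K := (LinearMap.range (A : H →ₗ[ℂ] H)).topologicalClosure) ⟨A x, memcl x⟩
    calc (projA A ∘L A) x
        = (Submodule.orthogonalProjectionOnto (LinearMap.range (A : H →ₗ[ℂ] H)).topologicalClosure (A x) :
            (LinearMap.range (A : H →ₗ[ℂ] H)).topologicalClosure) := by rw [hprojA_eq]; rfl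
      _ = A x := by rw [show Submodule.orthogonalProjectionOnto (LinearMap.range (A : H →ₗ[ℂ] H)).topologicalClosure
            (A x) = ⟨A x, memcl x⟩ from h]
  have hsaP : IsSelfAdjoint (projA A) := by
    rw [hprojA_eq]
    exact isSelfAdjoint_starProjection _
  have hAP : A ∘L projA A = A := by
    have hadj : ContinuousLinearMap.adjoint (projA A ∘L A) = A ∘L projA A := by
      rw [ContinuousLinearMap.adjoint_comp, hsaP.adjoint_eq, hA.isSelfAdjoint.adjoint_eq]
    calc A ∘L projA A = ContinuousLinearMap.adjoint (projA A ∘L A) := hadj.symm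
      _ = ContinuousLinearMap.adjoint A := by rw [hPA]
      _ = A := hA.isSelfAdjoint.adjoint_eq
  have hE : A = ContinuousLinearMap.adjoint U ∘L (A ∘L U) := by
    calc A = A ∘L projA A := hAP.symm
      _ = A ∘L (Uadj ∘L U) := by rw [hU1]
      _ = (A ∘L Uadj) ∘L U := (ContinuousLinearMap.comp_assoc _ _ _).symm
      _ = (ContinuousLinearMap.adjoint U ∘L A) ∘L U := by rw [h1]
      _ = ContinuousLinearMap.adjoint U ∘L (A ∘L U) :=
          ContinuousLinearMap.comp_assoc _ _ _
  have hUAU : ∀ x, ContinuousLinearMap.adjoint U (A (U x)) = A x := by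
    intro x
    conv_rhs => rw [hE]
    rfl
  have hUiso : ∀ x, anorm A (U x) = anorm A x := by
    intro x
    have hinner : (inner ℂ (A (U x)) (U x) : ℂ) = inner ℂ (A x) x := by
      calc (inner ℂ (A (U x)) (U x) : ℂ)
          = inner ℂ (ContinuousLinearMap.adjoint U (A (U x))) x :=
            (ContinuousLinearMap.adjoint_inner_left U x (A (U x))).symm
        _ = inner ℂ (A x) x := by rw [hUAU x]
    rw [anorm, anorm, ContinuousLinearMap.reApplyInnerSelf_apply,
      ContinuousLinearMap.reApplyInnerSelf_apply, hinner]
  constructor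
  · exact key_ineq A U T _ hA hT hUiso fun x => Or.inl (by
      simp [ContinuousLinearMap.add_apply, ContinuousLinearMap.mul_apply])
  · exact key_ineq A U T _ hA hT hUiso fun x => Or.inr (by
      simp [ContinuousLinearMap.sub_apply, ContinuousLinearMap.mul_apply])
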